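/- For n = 2, k = 1 and β₂ ∈ (0,1), set β₁ = 3/2 + β₂/2 - (1/2)√((1-β₂)(3β₂+9)) and t = (1-β₂+√((1-β₂)(3β₂+9)))/(2(2+β₂)), and T = 1 + 3(√(1+(2/3)β₁-(1/3)β₁²)+β₁-1)/(4-2β₁). Then T = 2(2+β₂)/(4-2β₁), t = (4-2β₁)/(2(2+β₂)), and hence T = 1/t. -/

import Mathlib

/-- On `𝔽₁` (`n = 2`, `k = 1`): for `β₂ ∈ (0,1)`, with
`β₁ = 3/2 + β₂/2 - (1/2)√((1-β₂)(3β₂+9))`, `t = (1-β₂+√((1-β₂)(3β₂+9)))/(2(2+β₂))`,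
and `T = 1 + 3(√(1+(2/3)β₁-(1/3)β₁²)+β₁-1)/(4-2β₁)`, one has
`T = 2(2+β₂)/(4-2β₁)`, `t = (4-2β₁)/(2(2+β₂))`, and `T = 1/t`. -/
theorem stmt14 (β₂ : ℝ) (hβ₂ : β₂ ∈ Set.Ioo (0 : ℝ) 1)
    (β₁ t T : ℝ)
    (hβ₁ : β₁ = 3 / 2 + β₂ / 2 - (1 / 2) * Real.sqrt ((1 - β₂) * (3 * β₂ + 9)))
    (ht : t = (1 - β₂ + Real.sqrt ((1 - β₂) * (3 * β₂ + 9))) / (2 * (2 + β₂)))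
    (hT : T = 1 + 3 * (Real.sqrt (1 + (2 / 3) * β₁ - (1 / 3) * β₁ ^ 2) + β₁ - 1)
        / (4 - 2 * β₁)) :
    T = 2 * (2 + β₂) / (4 - 2 * β₁) ∧ t = (4 - 2 * β₁) / (2 * (2 + β₂)) ∧ T = 1 / t := by
  obtain ⟨h0, h1⟩ := hβ₂
  set s := Real.sqrt ((1 - β₂) * (3 * β₂ + 9)) with hs
  have harg : (0 : ℝ) < (1 - β₂) * (3 * β₂ + 9) := by nlinarith
  have hs_pos : 0 < s := Real.sqrt_pos.mpr harg
  have hs2 : s ^ 2 = (1 - β₂) * (3 * β₂ + 9) := Real.sq_sqrt harg.le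
  -- the inner square root evaluates
  have hinner : Real.sqrt (1 + (2 / 3) * β₁ - (1 / 3) * β₁ ^ 2) = (3 + 3 * β₂ + s) / 6 := by
    have h : 1 + (2 / 3) * β₁ - (1 / 3) * β₁ ^ 2 = ((3 + 3 * β₂ + s) / 6) ^ 2 := by
      rw [hβ₁]; nlinarith [hs2]
    rw [h, Real.sqrt_sq (by nlinarith)]
  have hden : 4 - 2 * β₁ = 1 - β₂ + s := by rw [hβ₁]; ring
  have hden_pos : (0 : ℝ) < 4 - 2 * β₁ := by rw [hden]; nlinarith
  have hden2_pos : (0 : ℝ) < 2 * (2 + β₂) := by nlinarith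
  have hT' : T = 2 * (2 + β₂) / (4 - 2 * β₁) := by
    rw [hT, hinner, hden]
    have hne : 1 - β₂ + s ≠ 0 := by linarith
    field_simp
    rw [hβ₁]; ring
  have ht' : t = (4 - 2 * β₁) / (2 * (2 + β₂)) := by rw [ht, hden]
  refine ⟨hT', ht', ?_⟩
  rw [hT', ht', one_div_div]
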